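/- Let 0 < α̃ < 1, η ≥ 0, μ(ξ) = |ξ|^{(2α̃−1)/2}, and let U : [0,∞) → ℝ be continuous. For t ≥ 0 and ξ ∈ ℝ define φ(ξ,t) = μ(ξ) ∫₀ᵗ e^{−(ξ²+η)(t−s)} U(s) ds, which is the solution of ∂ₜφ(ξ,t) + (ξ²+η) φ(ξ,t) − U(t) μ(ξ) = 0 with φ(ξ,0) = 0. Then for every t > 0, π^{−1} sin(α̃π) ∫_{−∞}^{+∞} μ(ξ) φ(ξ,t) dξ = (1/Γ(1−α̃)) ∫₀ᵗ (t−τ)^{−α̃} e^{−η(t−τ)} U(τ) dτ, i.e. the output of the diffusive realization equals the generalized fractional integral I^{1−α̃,η}U evaluated at t. -/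

import Mathlib

set_option maxHeartbeats 1000000

open MeasureTheory Set

private lemma myIntegrableCompAbs {f : ℝ → ℝ}
    (hf : IntegrableOn (fun x => f |x|) (Ioi 0)) : Integrable fun x => f |x| := by
  have int_Iic : IntegrableOn (fun x ↦ f |x|) (Iic 0) := by
    rw [← Measure.map_neg_eq_self (volume : Measure ℝ)]
    have m : MeasurableEmbedding fun x : ℝ => -x := (Homeomorph.neg ℝ).measurableEmbedding
    rw [m.integrableOn_map_iff]
    simp_rw [Function.comp_def, abs_neg, neg_preimage, neg_Iic, neg_zero]
    exact (integrableOn_Ici_iff_integrableOn_Ioi).mpr hf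
  rw [← integrableOn_univ, ← Iic_union_Ioi (a := (0:ℝ))]
  exact int_Iic.union hf

private lemma gaussAbs {c r : ℝ} (hc : -1 < c) (hr : 0 < r) :
    (Integrable fun ξ : ℝ => |ξ| ^ c * Real.exp (-r * ξ ^ 2)) ∧
      ∫ ξ : ℝ, |ξ| ^ c * Real.exp (-r * ξ ^ 2)
        = r ^ (-((c + 1) / 2)) * Real.Gamma ((c + 1) / 2) := by
  have h1 : (fun ξ : ℝ => |ξ| ^ c * Real.exp (-r * ξ ^ 2))
      = fun ξ => (fun x : ℝ => x ^ c * Real.exp (-r * x ^ 2)) |ξ| := by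
    funext ξ; simp [sq_abs]
  have hIoi : IntegrableOn (fun x : ℝ => (fun x : ℝ => x ^ c * Real.exp (-r * x ^ 2)) |x|)
      (Ioi 0) := by
    refine (integrableOn_rpow_mul_exp_neg_mul_sq hr hc).congr_fun ?_ measurableSet_Ioi
    intro x hx
    have hx' : (0:ℝ) < x := hx
    simp only [abs_of_pos hx', sq_abs]
  constructor
  · rw [h1]
    exact myIntegrableCompAbs (f := fun x : ℝ => x ^ c * Real.exp (-r * x ^ 2)) hIoi
  · rw [h1, integral_comp_abs (f := fun x : ℝ => x ^ c * Real.exp (-r * x ^ 2))]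
    have h2 : ∫ x in Ioi (0:ℝ), x ^ c * Real.exp (-r * x ^ 2)
        = r ^ (-(c + 1) / 2) * (1 / 2) * Real.Gamma ((c + 1) / 2) := by
      have h := integral_rpow_mul_exp_neg_mul_rpow (p := 2) (q := c) (b := r)
        (by norm_num) hc hr
      rw [← h]
      refine setIntegral_congr_fun measurableSet_Ioi fun x _ => ?_
      rw [Real.rpow_two]
    rw [h2, show -(c + 1) / 2 = -((c + 1)/2) by ring]
    ring

theorem stmt3 (αt η : ℝ) (hαt0 : 0 < αt) (hαt1 : αt < 1) (hη : 0 ≤ η)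
    (U : ℝ → ℝ) (hU : ContinuousOn U (Ici (0:ℝ)))
    (φ : ℝ → ℝ → ℝ)
    (hφ : ∀ ξ : ℝ, ∀ t : ℝ, 0 ≤ t →
      φ ξ t = |ξ| ^ ((2 * αt - 1) / 2) *
        ∫ s in (0:ℝ)..t, Real.exp (-(ξ ^ 2 + η) * (t - s)) * U s)
    (t : ℝ) (ht : 0 < t) :
    Real.pi⁻¹ * Real.sin (αt * Real.pi) *
        ∫ ξ : ℝ, |ξ| ^ ((2 * αt - 1) / 2) * φ ξ t
      = (1 / Real.Gamma (1 - αt)) *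
        ∫ τ in (0:ℝ)..t, (t - τ) ^ (-αt) * Real.exp (-η * (t - τ)) * U τ := by
  set c : ℝ := 2 * αt - 1 with hc
  have hcgt : (-1:ℝ) < c := by rw [hc]; linarith
  have hα2 : (c + 1) / 2 = αt := by rw [hc]; ring
  -- continuous extension of U
  set V : ℝ → ℝ := fun s => U (max s 0) with hV
  have hVcont : Continuous V :=
    hU.comp_continuous (continuous_id.max continuous_const) fun x => mem_Ici.mpr (le_max_right _ _)
  have hVU : ∀ s : ℝ, 0 ≤ s → V s = U s := by
    intro s hs; rw [hV]; simp [max_eq_left hs]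
  set F : ℝ → ℝ → ℝ := fun ξ s =>
    |ξ| ^ c * (Real.exp (-(t - s) * ξ ^ 2) * (Real.exp (-η * (t - s)) * V s)) with hF
  -- rewrite the inner interval integral
  have hIoc : ∀ ξ : ℝ, (∫ s in (0:ℝ)..t, Real.exp (-(ξ ^ 2 + η) * (t - s)) * U s)
      = ∫ s in Ioo (0:ℝ) t, Real.exp (-(t - s) * ξ ^ 2) * (Real.exp (-η * (t - s)) * V s) := by
    intro ξ
    rw [intervalIntegral.integral_of_le ht.le, integral_Ioc_eq_integral_Ioo]
    refine setIntegral_congr_fun measurableSet_Ioo fun s hs => ?_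
    rw [hVU s hs.1.le,
      show -(ξ ^ 2 + η) * (t - s) = -(t - s) * ξ ^ 2 + -η * (t - s) by ring,
      Real.exp_add]
    ring
  -- LHS integrand rewrite
  have hL : (∫ ξ : ℝ, |ξ| ^ (c / 2) * φ ξ t) = ∫ ξ : ℝ, ∫ s in Ioo (0:ℝ) t, F ξ s := by
    refine integral_congr_ae ?_
    have h0 : ∀ᵐ ξ : ℝ, ξ ≠ 0 := by
      refine ae_iff.mpr ?_
      simpa using measure_singleton (0:ℝ)
    filter_upwards [h0] with ξ hξ
    rw [hφ ξ t ht.le, hIoc ξ]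
    simp only [hF]
    rw [integral_const_mul, ← mul_assoc, ← Real.rpow_add (abs_pos.mpr hξ),
      show c / 2 + c / 2 = c by ring]
  -- measurability of uncurried F
  have hFm : AEStronglyMeasurable (Function.uncurry F)
      ((volume : Measure ℝ).prod (volume.restrict (Ioo (0:ℝ) t))) := by
    apply Measurable.aestronglyMeasurable
    have hVm : Measurable V := hVcont.measurable
    simp only [hF, Function.uncurry]
    fun_prop
  -- slice integrability & norm formula on Ioo
  have hslice : ∀ s ∈ Ioo (0:ℝ) t,
      (Integrable fun ξ : ℝ => F ξ s) ∧
        (∫ ξ : ℝ, ‖F ξ s‖)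
          = (t - s) ^ (-αt) * Real.Gamma αt * (Real.exp (-η * (t - s)) * |V s|) := by
    intro s hs
    have hts : 0 < t - s := sub_pos.2 hs.2
    obtain ⟨hInt, hVal⟩ := gaussAbs hcgt hts
    constructor
    · have : (fun ξ => F ξ s)
          = fun ξ => (|ξ| ^ c * Real.exp (-(t - s) * ξ ^ 2))
              * (Real.exp (-η * (t - s)) * V s) := by
        funext ξ; rw [hF]; ring
      rw [this]; exact hInt.mul_const _
    · have hnorm : (fun ξ : ℝ => ‖F ξ s‖)
          = fun ξ => (|ξ| ^ c * Real.exp (-(t - s) * ξ ^ 2))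
              * (Real.exp (-η * (t - s)) * |V s|) := by
        funext ξ
        rw [hF, Real.norm_eq_abs, abs_mul, abs_mul, abs_mul,
          abs_of_nonneg (Real.rpow_nonneg (abs_nonneg ξ) c),
          abs_of_nonneg (Real.exp_pos _).le, abs_of_nonneg (Real.exp_pos _).le]
        ring
      rw [hnorm, integral_mul_const, hVal, hα2]
  -- product integrability
  have hProd : Integrable (Function.uncurry F)
      ((volume : Measure ℝ).prod (volume.restrict (Ioo (0:ℝ) t))) := by
    rw [integrable_prod_iff' hFm]
    constructor
    · filter_upwards [ae_restrict_mem measurableSet_Ioo] with s hs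
      exact (hslice s hs).1
    · -- dominating function
      have hg : IntegrableOn
          (fun s => (t - s) ^ (-αt) * ((Real.Gamma αt) * (Real.exp (-η * (t - s)) * |V s|)))
          (Icc (0:ℝ) t) := by
        have h1 : IntegrableOn (fun s => (t - s) ^ (-αt)) (Icc (0:ℝ) t) := by
          rw [integrableOn_Icc_iff_integrableOn_Ioc]
          have h2 := (intervalIntegral.intervalIntegrable_rpow' (a := 0) (b := t)
            (r := -αt) (by linarith)).comp_sub_left t
          simp only [sub_zero, sub_self] at h2
          have h3 := h2.symm
          rw [intervalIntegrable_iff_integrableOn_Ioc_of_le ht.le] at h3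
          exact h3
        refine h1.mul_continuousOn ?_ isCompact_Icc
        exact Continuous.continuousOn (by fun_prop)
      have hg' : Integrable
          (fun s => (t - s) ^ (-αt) * ((Real.Gamma αt) * (Real.exp (-η * (t - s)) * |V s|)))
          (volume.restrict (Ioo (0:ℝ) t)) :=
        hg.mono_set Ioo_subset_Icc_self
      refine hg'.congr ?_
      filter_upwards [ae_restrict_mem measurableSet_Ioo] with s hs
      simp only [Function.uncurry_apply_pair]
      rw [(hslice s hs).2]; ring
  -- swap
  have hswap : (∫ ξ : ℝ, ∫ s in Ioo (0:ℝ) t, F ξ s)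
      = ∫ s in Ioo (0:ℝ) t, ∫ ξ : ℝ, F ξ s := integral_integral_swap hProd
  -- evaluate inner integral
  have hinner : (∫ s in Ioo (0:ℝ) t, ∫ ξ : ℝ, F ξ s)
      = Real.Gamma αt * ∫ s in Ioo (0:ℝ) t,
          (t - s) ^ (-αt) * Real.exp (-η * (t - s)) * V s := by
    rw [← integral_const_mul]
    refine setIntegral_congr_fun measurableSet_Ioo fun s hs => ?_
    have hts : 0 < t - s := sub_pos.2 hs.2
    obtain ⟨_, hVal⟩ := gaussAbs hcgt hts
    have : (fun ξ => F ξ s)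
        = fun ξ => (|ξ| ^ c * Real.exp (-(t - s) * ξ ^ 2))
            * (Real.exp (-η * (t - s)) * V s) := by
      funext ξ; rw [hF]; ring
    rw [this, integral_mul_const, hVal, hα2]
    ring
  -- RHS rewrite
  have hR : (∫ τ in (0:ℝ)..t, (t - τ) ^ (-αt) * Real.exp (-η * (t - τ)) * U τ)
      = ∫ s in Ioo (0:ℝ) t, (t - s) ^ (-αt) * Real.exp (-η * (t - s)) * V s := by
    rw [intervalIntegral.integral_of_le ht.le, integral_Ioc_eq_integral_Ioo]
    refine setIntegral_congr_fun measurableSet_Ioo fun s hs => ?_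
    rw [hVU s hs.1.le]
  -- constants
  have hsin : Real.sin (αt * Real.pi) ≠ 0 := by
    refine ne_of_gt (Real.sin_pos_of_pos_of_lt_pi ?_ ?_)
    · positivity
    · nlinarith [Real.pi_pos]
  have hrefl := Real.Gamma_mul_Gamma_one_sub αt
  have hΓ1 : 0 < Real.Gamma (1 - αt) := Real.Gamma_pos_of_pos (by linarith)
  have hconst : Real.pi⁻¹ * Real.sin (αt * Real.pi) * Real.Gamma αt
      = 1 / Real.Gamma (1 - αt) := by
    rw [mul_comm Real.pi αt] at hrefl
    have key : Real.Gamma αt * Real.Gamma (1 - αt) * Real.sin (αt * Real.pi) = Real.pi := by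
      rw [hrefl]; exact div_mul_cancel₀ _ hsin
    field_simp
    rw [mul_comm Real.pi αt]
    linear_combination key
  calc Real.pi⁻¹ * Real.sin (αt * Real.pi) * ∫ ξ : ℝ, |ξ| ^ ((2 * αt - 1) / 2) * φ ξ t
      = Real.pi⁻¹ * Real.sin (αt * Real.pi) *
          (Real.Gamma αt * ∫ s in Ioo (0:ℝ) t,
            (t - s) ^ (-αt) * Real.exp (-η * (t - s)) * V s) := by
        rw [← hinner, ← hswap, ← hL]
    _ = (1 / Real.Gamma (1 - αt)) *
          ∫ τ in (0:ℝ)..t, (t - τ) ^ (-αt) * Real.exp (-η * (t - τ)) * U τ := by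
        rw [hR, ← mul_assoc, hconst]
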